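/- Fix a finite group L, an integer t ≥ 2 and θ ∈ Aut(L). If (x_1, …, x_t) ∈ L^t and ℓ = x_t·x_{t-1}·⋯·x_2·x_1, then the twisted homogeneous rack C_{(x_1,…,x_t)} equals C_ℓ, i.e. (x_1, …, x_t) and (e, …, e, ℓ) lie in the same twisted conjugacy class of L^t with respect to u. -/

import Mathlib

/-- The automorphism `u` of `L^t`: `u(ℓ₁, …, ℓ_t) = (θ(ℓ_t), ℓ₁, …, ℓ_{t-1})`
(indices `0, …, t-1`, so coordinate `0` is `ℓ₁` and coordinate `t-1` is `ℓ_t`). -/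
def thrU {L : Type*} [Group L] (θ : L ≃* L) (t : ℕ) (x : Fin t → L) : Fin t → L :=
  fun i => if (i : ℕ) = 0 then θ (x ⟨t - 1, by have := i.2; omega⟩)
    else x ⟨(i : ℕ) - 1, by have := i.2; omega⟩

/-- The rack operation `y ▹ z = y · u(z · y⁻¹)` on `L^t`. -/
def thrOp {L : Type*} [Group L] (θ : L ≃* L) (t : ℕ) (y z : Fin t → L) : Fin t → L :=
  y * thrU θ t (z * y⁻¹)

/-- The element `(e, …, e, ℓ)` of `L^t`. -/
def thrBase {L : Type*} [Group L] (t : ℕ) (ℓ : L) : Fin t → L :=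
  fun i => if (i : ℕ) = t - 1 then ℓ else 1

/-- The twisted conjugacy class (twisted homogeneous rack) of `x ∈ L^t`
with respect to `u`, i.e. the orbit of `x` under `g ⇀ x = g · x · u(g)⁻¹`. -/
def thrClassOf {L : Type*} [Group L] (θ : L ≃* L) (t : ℕ) (x : Fin t → L) :
    Set (Fin t → L) :=
  {y | ∃ g : Fin t → L, g * x * (thrU θ t g)⁻¹ = y}

/-- The twisted homogeneous rack `C_ℓ = C_{(e,…,e,ℓ)}` of class `(L, t, θ)`. -/
def thrClass {L : Type*} [Group L] (θ : L ≃* L) (t : ℕ) (ℓ : L) : Set (Fin t → L) :=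
  thrClassOf θ t (thrBase t ℓ)

/-- The twisted conjugacy class `O^{L,θ}_ℓ = {a·ℓ·θ(a)⁻¹ : a ∈ L}`. -/
def twConjClass {L : Type*} [Group L] (θ : L ≃* L) (ℓ : L) : Set L :=
  {k | ∃ a : L, a * ℓ * (θ a)⁻¹ = k}

/-- If `(x₁, …, x_t) ∈ L^t` and `ℓ = x_t · x_{t-1} ⋯ x₂ · x₁`, then
`C_{(x₁,…,x_t)} = C_ℓ`, i.e. `(x₁, …, x_t)` and `(e, …, e, ℓ)` have the same
twisted conjugacy class in `L^t`. -/
lemma thrU_mul {L : Type*} [Group L] (θ : L ≃* L) (t : ℕ) (a b : Fin t → L) :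
    thrU θ t (a * b) = thrU θ t a * thrU θ t b := by
  funext i
  simp only [thrU, Pi.mul_apply]
  split <;> simp

lemma thrU_inv {L : Type*} [Group L] (θ : L ≃* L) (t : ℕ) (a : Fin t → L) :
    thrU θ t a⁻¹ = (thrU θ t a)⁻¹ := by
  funext i
  simp only [thrU, Pi.inv_apply]
  split <;> simp

lemma thrClassOf_eq_of_rel {L : Type*} [Group L] (θ : L ≃* L) (t : ℕ)
    (x y g : Fin t → L) (h : g * x * (thrU θ t g)⁻¹ = y) :
    thrClassOf θ t x = thrClassOf θ t y := by
  subst h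
  ext z
  constructor
  · rintro ⟨k, rfl⟩
    exact ⟨k * g⁻¹, by rw [thrU_mul, thrU_inv]; group⟩
  · rintro ⟨k, rfl⟩
    exact ⟨k * g, by rw [thrU_mul]; group⟩

/-- Partial product `x_n ⋯ x_1 x_0`. -/
def thrPP {L : Type*} [Group L] {t : ℕ} (x : Fin t → L) (n : ℕ) : L :=
  (((List.ofFn x).take (n + 1)).reverse).prod

lemma thrPP_zero {L : Type*} [Group L] {t : ℕ} (x : Fin t → L) (ht : 0 < t) :
    thrPP x 0 = x ⟨0, ht⟩ := by
  simp [thrPP, List.take_succ, List.ofFnNthVal, ht]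

lemma thrPP_succ {L : Type*} [Group L] {t : ℕ} (x : Fin t → L) (n : ℕ)
    (h : n + 1 < t) : thrPP x (n + 1) = x ⟨n + 1, h⟩ * thrPP x n := by
  have hl : n + 1 < (List.ofFn x).length := by simpa using h
  simp [thrPP, List.take_succ (i := n + 1), List.getElem?_eq_getElem hl]

lemma thrPP_pred {L : Type*} [Group L] {t : ℕ} (x : Fin t → L) (n : ℕ)
    (h : n < t) (hn : n ≠ 0) : thrPP x n = x ⟨n, h⟩ * thrPP x (n - 1) := by
  obtain ⟨m, rfl⟩ := Nat.exists_eq_succ_of_ne_zero hn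
  exact thrPP_succ x m h

lemma thrPP_last {L : Type*} [Group L] {t : ℕ} (x : Fin t → L) (ht : 0 < t) :
    thrPP x (t - 1) = (List.ofFn x).reverse.prod := by
  have : t - 1 + 1 = t := by omega
  rw [thrPP, this, List.take_of_length_le (by simp)]


theorem thrClassOf_eq_thrClass_prod {L : Type*} [Group L] [Fintype L]
    (θ : L ≃* L) (t : ℕ) (ht : 2 ≤ t) (x : Fin t → L) :
    thrClassOf θ t x = thrClass θ t (List.ofFn x).reverse.prod := by
  set ℓ := (List.ofFn x).reverse.prod with hℓ
  set g : Fin t → L := fun i => if (i : ℕ) = t - 1 then 1 else (thrPP x i)⁻¹ with hg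
  apply thrClassOf_eq_of_rel θ t x (thrBase t ℓ) g
  funext i
  rcases i with ⟨i, hi⟩
  simp only [Pi.mul_apply, Pi.inv_apply, thrU, thrBase]
  by_cases h0 : i = 0
  · subst h0
    have h1 : ¬ (0 = t - 1) := by omega
    simp only [if_pos rfl, hg, if_neg h1, if_pos rfl, if_true, map_one, inv_one, mul_one]
    rw [thrPP_zero x (by omega)]
    exact inv_mul_cancel (x ⟨0, hi⟩)
  · by_cases h1 : i = t - 1
    · subst h1
      have h2 : ¬ (t - 1 - 1 = t - 1) := by omega
      simp only [if_neg h0, hg, if_pos rfl, if_neg h2, one_mul, inv_inv]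
      rw [if_true, ← thrPP_pred x (t - 1) hi h0, thrPP_last x (by omega)]
    · have h2 : ¬ (i - 1 = t - 1) := by omega
      simp only [if_neg h0, hg, if_neg h1, if_neg h2, inv_inv]
      rw [thrPP_pred x i hi h0]
      group
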